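/- arXiv:2202.10311 — 2 statements merged into one kernel-verified Lean document; each statement's English description precedes it below -/
import Mathlib

section
/- Let X be a compact metric space, α a homeomorphism, 𝒱 a line bundle, ℰ = Γ(𝒱,α), Y ⊆ X nonempty closed, and N ≥ 1. Suppose U ⊆ X is open with 𝒱|_{α^n(U)} trivial for 0 ≤ n ≤ N−1. If f ∈ C(X) is positive with support in U and f vanishes on ∪_{n=1}^{N} α^{-n}(Y), then f is Cuntz equivalent to f∘α^{-N} in the orbit-breaking algebra O(ℰ_Y): explicitly, there exist sections ξ_1,…,ξ_N ∈ ℰ with ξ_n*ξ_n·(f∘α^{-n+1}) = f∘α^{-n+1} and ξ_nξ_n*·(f∘α^{-n}) = f∘α^{-n}, and a = f^{1/2}ξ_1*⋯ξ_N* ∈ O(ℰ_Y) satisfies aa* = f and a*a = f∘α^{-N}. -/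
/-!
STATEMENT 14. Let `X` be a compact metric space, `α` a homeomorphism, `𝒱` a Hermitian
line bundle, `ℰ = Γ(𝒱,α)`, `Y ⊆ X` nonempty closed, `N ≥ 1`, and `U ⊆ X` open with
`𝒱|_{αⁿ(U)}` trivial for `0 ≤ n ≤ N−1`.  If `f ∈ C(X)` is positive with support in `U`
and `f` vanishes on `∪_{n=1}^N α^{-n}(Y)`, then `f` is Cuntz equivalent to `f∘α^{-N}`
in the orbit-breaking algebra `O(ℰ_Y)`: explicitly, there exist sections `ξ_1, …, ξ_N`
with `ξ_n*ξ_n·(f∘α^{-(n-1)}) = f∘α^{-(n-1)}` and `ξ_nξ_n*·(f∘α^{-n}) = f∘α^{-n}`, and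
`a = f^{1/2} ξ_1* ⋯ ξ_N*` lies in `O(ℰ_Y)` and satisfies `aa* = f`, `a*a = f∘α^{-N}`.
Here `O(ℰ_Y)` is modelled inside a faithful covariant representation `(p, t)` of `ℰ` as
the closed *-subalgebra generated by `p(C(X))` and `t(ℰ_Y)`, where by Lemma 6.2 the
sections in `ℰ_Y = C₀(X∖Y)ℰ` are exactly those vanishing on `α⁻¹(Y)`.
-/

def Sect {X : Type*} [TopologicalSpace X] (V : X → Type*)
    [∀ x, NormedAddCommGroup (V x)] [TopologicalSpace (Bundle.TotalSpace ℂ V)] :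
    Type _ :=
  {s : ∀ x, V x // Continuous fun x => (Bundle.TotalSpace.mk x (s x) : Bundle.TotalSpace ℂ V)}

def TrivialOver {X : Type*} [TopologicalSpace X] (V : X → Type*)
    [∀ x, NormedAddCommGroup (V x)] [TopologicalSpace (Bundle.TotalSpace ℂ V)]
    (W : Set X) : Prop :=
  ∃ s : ∀ x, V x,
    ContinuousOn (fun x => (Bundle.TotalSpace.mk x (s x) : Bundle.TotalSpace ℂ V)) W ∧
    ∀ x ∈ W, ‖s x‖ = 1

noncomputable def toC {X : Type*} [TopologicalSpace X] (f : C(X, ℝ)) : C(X, ℂ) :=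
  ⟨fun x => (f x : ℂ), Complex.continuous_ofReal.comp f.continuous⟩

structure IsCovRep {X : Type*} [TopologicalSpace X] [CompactSpace X] (α : X ≃ₜ X)
    (V : X → Type*) [∀ x, NormedAddCommGroup (V x)] [∀ x, InnerProductSpace ℂ (V x)]
    [TopologicalSpace (Bundle.TotalSpace ℂ V)]
    (B : Type*) [NormedRing B] [StarRing B] [NormedAlgebra ℂ B]
    (p : C(X, ℂ) →⋆ₐ[ℂ] B) (t : Sect V → B) : Prop where
  injective : Function.Injective p
  map_add : ∀ ξ η ζ : Sect V, (∀ x, ζ.1 x = ξ.1 x + η.1 x) → t ζ = t ξ + t η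
  inner_right : ∀ (ξ η : Sect V) (g : C(X, ℂ)),
    (∀ x, (inner ℂ (ξ.1 x) (η.1 x) : ℂ) = g x) → star (t ξ) * t η = p g
  inner_left : ∀ (ξ η : Sect V) (g : C(X, ℂ)),
    (∀ x, (inner ℂ (η.1 (α.symm x)) (ξ.1 (α.symm x)) : ℂ) = g x) →
      t ξ * star (t η) = p g
  left_act : ∀ (f : C(X, ℂ)) (ξ η : Sect V),
    (∀ x, η.1 x = f (α x) • ξ.1 x) → t η = p f * t ξ
  right_act : ∀ (f : C(X, ℂ)) (ξ η : Sect V),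
    (∀ x, η.1 x = f x • ξ.1 x) → t η = t ξ * p f

/-- The orbit-breaking subalgebra `O(ℰ_Y) ⊆ O(ℰ)`: the closed *-subalgebra generated by
`C(X)` and the sections of `ℰ_Y = C₀(X∖Y)ℰ`, i.e. those vanishing on `α⁻¹(Y)`. -/
noncomputable def OBalg {X : Type*} [TopologicalSpace X] [CompactSpace X] (α : X ≃ₜ X)
    (V : X → Type*) [∀ x, NormedAddCommGroup (V x)] [∀ x, InnerProductSpace ℂ (V x)]
    [TopologicalSpace (Bundle.TotalSpace ℂ V)]
    (B : Type*) [NormedRing B] [StarRing B] [NormedAlgebra ℂ B] [StarModule ℂ B]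
    [ContinuousStar B]
    (p : C(X, ℂ) →⋆ₐ[ℂ] B) (t : Sect V → B) (Y : Set X) : StarSubalgebra ℂ B :=
  (StarAlgebra.adjoin ℂ
    (Set.range ⇑p ∪ t '' {ξ : Sect V | ∀ x, α x ∈ Y → ξ.1 x = 0})).topologicalClosure

/-! ### Auxiliary material -/

section prods
variable {B : Type*} [Monoid B]

def prodUp (d : ℕ → B) : ℕ → B
  | 0 => 1
  | k + 1 => prodUp d k * d k

def prodDown (d : ℕ → B) : ℕ → B
  | 0 => 1
  | k + 1 => d k * prodDown d k

lemma ofFn_prod_eq (d : ℕ → B) (k : ℕ) :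
    (List.ofFn fun i : Fin k => d i).prod = prodUp d k := by
  induction k with
  | zero => simp [prodUp]
  | succ k ih =>
    rw [List.ofFn_succ']
    simp only [List.concat_eq_append, List.prod_append, List.prod_cons, List.prod_nil,
      mul_one, Fin.coe_castSucc, Fin.val_last]
    rw [prodUp, ih]

lemma star_prodDown {B : Type*} [Monoid B] [StarMul B] (d : ℕ → B) (k : ℕ) :
    star (prodDown d k) = prodUp (fun i => star (d i)) k := by
  induction k with
  | zero => simp [prodUp, prodDown]
  | succ k ih => rw [prodUp, prodDown, star_mul, ih]

end prods

lemma contZeroSect {X : Type*} [TopologicalSpace X] {V : X → Type*}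
    [∀ x, NormedAddCommGroup (V x)] [∀ x, InnerProductSpace ℂ (V x)]
    [TopologicalSpace (Bundle.TotalSpace ℂ V)] [FiberBundle ℂ V] [VectorBundle ℂ ℂ V] :
    Continuous fun x => (Bundle.TotalSpace.mk x (0 : V x) : Bundle.TotalSpace ℂ V) := by
  rw [continuous_iff_continuousAt]
  intro x
  set e := trivializationAt ℂ V x with he
  have hxe : x ∈ e.baseSet := FiberBundle.mem_baseSet_trivializationAt ℂ V x
  apply ContinuousOn.continuousAt _ (e.open_baseSet.mem_nhds hxe)
  have h1 : ContinuousOn (fun y : X => (y, (0 : ℂ))) e.baseSet :=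
    (continuous_id.prodMk continuous_const).continuousOn
  have h2 := e.continuousOn_symm.comp h1 (fun y hy => ⟨hy, Set.mem_univ _⟩)
  apply h2.congr
  intro y hy
  show Bundle.TotalSpace.mk y (0 : V y) = Bundle.TotalSpace.mk y (e.symm y 0)
  congr 1
  rw [← e.coe_symmₗ (R := ℂ) hy]
  exact (map_zero _).symm

lemma contSmulSect {X : Type*} [TopologicalSpace X] {V : X → Type*}
    [∀ x, NormedAddCommGroup (V x)] [∀ x, InnerProductSpace ℂ (V x)]
    [TopologicalSpace (Bundle.TotalSpace ℂ V)] [FiberBundle ℂ V] [VectorBundle ℂ ℂ V]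
    (g : C(X, ℂ)) (s : ∀ x, V x) (W : Set X) (hW : IsOpen W)
    (hs : ContinuousOn (fun x => (Bundle.TotalSpace.mk x (s x) : Bundle.TotalSpace ℂ V)) W)
    (hsupp : tsupport ⇑g ⊆ W) :
    Continuous fun x => (Bundle.TotalSpace.mk x (g x • s x) : Bundle.TotalSpace ℂ V) := by
  rw [continuous_iff_continuousAt]
  intro x
  by_cases hx : x ∈ W
  · set e := trivializationAt ℂ V x with he
    have hxe : x ∈ e.baseSet := FiberBundle.mem_baseSet_trivializationAt ℂ V x
    have hO : IsOpen (W ∩ e.baseSet) := hW.inter e.open_baseSet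
    have hxO : x ∈ W ∩ e.baseSet := ⟨hx, hxe⟩
    apply ContinuousOn.continuousAt _ (hO.mem_nhds hxO)
    have hcont1 : ContinuousOn (fun y => e (Bundle.TotalSpace.mk y (s y))) (W ∩ e.baseSet) := by
      apply e.continuousOn.comp (hs.mono Set.inter_subset_left)
      intro y hy
      rw [e.mem_source]
      exact hy.2
    have hcont2 : ContinuousOn
        (fun y => (y, g y • (e (Bundle.TotalSpace.mk y (s y))).2)) (W ∩ e.baseSet) :=
      continuousOn_id.prodMk ((g.continuous.continuousOn).smul hcont1.snd)
    have h2 := e.continuousOn_symm.comp hcont2 (fun y hy => ⟨hy.2, Set.mem_univ _⟩)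
    apply h2.congr
    intro y hy
    show Bundle.TotalSpace.mk y (g y • s y)
        = Bundle.TotalSpace.mk y (e.symm y (g y • (e (Bundle.TotalSpace.mk y (s y))).2))
    have h1 : e.symm y (g y • (e (Bundle.TotalSpace.mk y (s y))).2)
        = g y • e.symm y ((e (Bundle.TotalSpace.mk y (s y))).2) := by
      rw [← e.coe_symmₗ (R := ℂ) hy.2]
      exact map_smul _ _ _
    rw [h1, e.symm_apply_apply_mk hy.2]
  · have hx' : x ∉ tsupport ⇑g := fun h => hx (hsupp h)
    have hev : ∀ᶠ y in nhds x, g y = 0 := by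
      filter_upwards [(isClosed_tsupport (⇑g)).isOpen_compl.mem_nhds hx'] with y hy
      exact image_eq_zero_of_notMem_tsupport hy
    apply ContinuousAt.congr (contZeroSect.continuousAt)
    filter_upwards [hev] with y hy
    simp [hy]

lemma toC_apply_aux {X : Type*} [TopologicalSpace X] (f : C(X, ℝ)) (x : X) :
    toC f x = (f x : ℂ) := rfl

theorem statement14
    (X : Type*) [MetricSpace X] [CompactSpace X]
    (α : X ≃ₜ X)
    (V : X → Type*) [∀ x, NormedAddCommGroup (V x)] [∀ x, InnerProductSpace ℂ (V x)]
    [TopologicalSpace (Bundle.TotalSpace ℂ V)] [FiberBundle ℂ V] [VectorBundle ℂ ℂ V]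
    (B : Type*) [NormedRing B] [StarRing B] [CStarRing B] [NormedAlgebra ℂ B]
    [StarModule ℂ B] [ContinuousStar B] [CompleteSpace B]
    (p : C(X, ℂ) →⋆ₐ[ℂ] B) (t : Sect V → B)
    (hrep : IsCovRep α V B p t)
    (Y : Set X) (hYne : Y.Nonempty) (hYcl : IsClosed Y)
    (N : ℕ) (hN : 1 ≤ N)
    (U : Set X) (hUopen : IsOpen U)
    -- 𝒱|_{αⁿ(U)} is trivial for 0 ≤ n ≤ N−1
    (htriv : ∀ n < N, TrivialOver V ((⇑α)^[n] '' U))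
    -- f ≥ 0, supported in U, vanishing on ∪_{n=1}^N α^{-n}(Y)
    (f : C(X, ℝ)) (hf0 : 0 ≤ f) (hsupp : tsupport ⇑f ⊆ U)
    (hvan : ∀ n, 1 ≤ n → n ≤ N → ∀ y ∈ Y, f ((⇑α.symm)^[n] y) = 0) :
    ∃ ξs : Fin N → Sect V,
      -- the local units: ξ_n*ξ_n (f∘α^{-(n-1)}) = f∘α^{-(n-1)},
      --                  ξ_nξ_n* (f∘α^{-n})     = f∘α^{-n}
      (∀ i : Fin N,
        star (t (ξs i)) * t (ξs i)
            * p ((toC f).comp ⟨(⇑α.symm)^[(i : ℕ)], α.symm.continuous.iterate _⟩)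
          = p ((toC f).comp ⟨(⇑α.symm)^[(i : ℕ)], α.symm.continuous.iterate _⟩) ∧
        t (ξs i) * star (t (ξs i))
            * p ((toC f).comp ⟨(⇑α.symm)^[(i : ℕ) + 1], α.symm.continuous.iterate _⟩)
          = p ((toC f).comp ⟨(⇑α.symm)^[(i : ℕ) + 1], α.symm.continuous.iterate _⟩)) ∧
      -- and a = f^{1/2} ξ_1* ⋯ ξ_N* ∈ O(ℰ_Y) satisfies aa* = f and a*a = f∘α^{-N}
      (∀ a : B,
        a = p (toC ⟨fun x => Real.sqrt (f x), Real.continuous_sqrt.comp f.continuous⟩)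
              * (List.ofFn fun i : Fin N => star (t (ξs i))).prod →
        a ∈ OBalg α V B p t Y ∧
        a * star a = p (toC f) ∧
        star a * a = p ((toC f).comp ⟨(⇑α.symm)^[N], α.symm.continuous.iterate _⟩)) := by
  classical
  have hf0' : ∀ x, 0 ≤ f x := fun x => by
    have := hf0; rw [ContinuousMap.le_def] at this; simpa using this x
  have hinv : ∀ (n : ℕ) (x : X), (⇑α)^[n] ((⇑α.symm)^[n] x) = x := fun n x =>
    (Function.LeftInverse.iterate α.apply_symm_apply n) x
  have hinv' : ∀ (n : ℕ) (x : X), (⇑α.symm)^[n] ((⇑α)^[n] x) = x := fun n x =>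
    (Function.LeftInverse.iterate α.symm_apply_apply n) x
  -- trivializing unit sections
  choose s hscont hsnorm using htriv
  -- open images and compact supports
  have himgopen : ∀ n : ℕ, IsOpen ((⇑α)^[n] '' U) := by
    intro n
    induction n with
    | zero => simpa using hUopen
    | succ n ih =>
      rw [Function.iterate_succ', Set.image_comp]
      exact (α.isOpen_image).2 ih
  have hKcomp : ∀ n : ℕ, IsCompact ((⇑α)^[n] '' tsupport ⇑f) := fun n =>
    ((isClosed_tsupport _).isCompact).image (α.continuous.iterate n)
  have hKcl : ∀ n : ℕ, IsClosed ((⇑α)^[n] '' tsupport ⇑f) := fun n => (hKcomp n).isClosed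
  have hKsub : ∀ n : ℕ, (⇑α)^[n] '' tsupport ⇑f ⊆ (⇑α)^[n] '' U := fun n =>
    Set.image_mono hsupp
  -- bump functions
  have hbump : ∀ n, n < N → ∃ g : C(X, ℝ), tsupport ⇑g ⊆ (⇑α)^[n] '' U ∧
      Set.EqOn ⇑g 1 ((⇑α)^[n] '' tsupport ⇑f) ∧ ∀ x, g x ∈ Set.Icc (0 : ℝ) 1 := by
    intro n hn
    exact exists_tsupport_one_of_isOpen_isClosed (himgopen n)
      (IsClosed.isCompact isClosed_closure) (hKcl n) (hKsub n)
  choose g₀ hgsupp hgone hgmem using hbump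
  -- total bump functions
  set gg : ℕ → C(X, ℝ) := fun n => if h : n < N then g₀ n h else 0 with hggdef
  -- the sections
  have hsuppC : ∀ n (h : n < N), tsupport ⇑(toC (g₀ n h)) ⊆ (⇑α)^[n] '' U := by
    intro n h
    refine le_trans (closure_mono ?_) (hgsupp n h)
    intro x hx
    simp only [Function.mem_support, toC, ContinuousMap.coe_mk, Ne, Complex.ofReal_eq_zero] at hx ⊢
    exact hx
  set ξr : ℕ → Sect V := fun n =>
    if h : n < N then
      ⟨fun x => ((g₀ n h x : ℂ)) • s n h x,
        (contSmulSect (toC (g₀ n h)) (s n h) _ (himgopen n) (hscont n h) (hsuppC n h)).congr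
          (fun x => by rw [toC_apply_aux])⟩
    else ⟨fun x => 0, contZeroSect⟩ with hξrdef
  -- pointwise facts
  have hgg0 : ∀ n x, 0 ≤ gg n x := by
    intro n x
    simp only [hggdef]
    split
    · exact (hgmem n ‹_› x).1
    · simp
  have hnorm : ∀ n x, ‖(ξr n).1 x‖ = gg n x := by
    intro n x
    by_cases h : n < N
    · have e1 : (ξr n).1 x = (g₀ n h x : ℂ) • s n h x :=
        congrArg (fun z : Sect V => z.1 x) (dif_pos h)
      have e2 : gg n = g₀ n h := dif_pos h
      rw [e1, e2]
      by_cases hx : x ∈ (⇑α)^[n] '' U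
      · rw [norm_smul, hsnorm n h x hx]
        simp [abs_of_nonneg ((hgmem n h x).1)]
      · have : g₀ n h x = 0 := by
          apply image_eq_zero_of_notMem_tsupport
          exact fun hc => hx (hgsupp n h hc)
        simp [this]
    · have e1 : (ξr n).1 x = 0 := congrArg (fun z : Sect V => z.1 x) (dif_neg h)
      have e2 : gg n = 0 := dif_neg h
      rw [e1, e2]
      simp
  have hgone' : ∀ n, n < N → ∀ x : X, f ((⇑α.symm)^[n] x) ≠ 0 → gg n x = 1 := by
    intro n hn x hfx
    have hx : x ∈ (⇑α)^[n] '' tsupport ⇑f := by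
      refine ⟨(⇑α.symm)^[n] x, subset_tsupport _ hfx, hinv n x⟩
    simp only [hggdef]
    rw [dif_pos hn]
    simpa using hgone n hn hx
  have hinner : ∀ n x, (inner ℂ ((ξr n).1 x) ((ξr n).1 x) : ℂ) = ((gg n x : ℝ) : ℂ) ^ 2 := by
    intro n x
    rw [inner_self_eq_norm_sq_to_K, hnorm n x]
    norm_cast
  
  -- the smul-section constructor
  let sm : C(X, ℂ) → Sect V → Sect V := fun g ξ =>
    ⟨fun x => g x • ξ.1 x,
      contSmulSect g ξ.1 Set.univ isOpen_univ (ξ.2.continuousOn) (Set.subset_univ _)⟩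
  -- basic commutation
  have hswap : ∀ (h : C(X, ℂ)) (ξ : Sect V),
      p h * t ξ = t ξ * p (h.comp ⟨⇑α, α.continuous⟩) := by
    intro h ξ
    have h1 := hrep.left_act h ξ (sm (h.comp ⟨⇑α, α.continuous⟩) ξ) (fun x => rfl)
    have h2 := hrep.right_act (h.comp ⟨⇑α, α.continuous⟩) ξ
      (sm (h.comp ⟨⇑α, α.continuous⟩) ξ) (fun x => rfl)
    rw [← h1, h2]
  set Sb : ℕ → B := fun k => prodDown (fun i => t (ξr i)) k with hSb
  have hSbsucc : ∀ k, Sb (k + 1) = t (ξr k) * Sb k := fun k => rfl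
  have hSb0 : Sb 0 = 1 := rfl
  have hmoveS : ∀ (h : C(X, ℂ)) (k : ℕ),
      p h * Sb k = Sb k * p (h.comp ⟨(⇑α)^[k], α.continuous.iterate k⟩) := by
    intro h k
    induction k generalizing h with
    | zero =>
      rw [hSb0, one_mul, mul_one]
      exact congrArg p (ContinuousMap.ext fun x => rfl)
    | succ k ih =>
      rw [hSbsucc, ← mul_assoc, hswap, mul_assoc, ih, ← mul_assoc]
      congr 2
      exact ContinuousMap.ext fun x => congrArg h (Function.iterate_succ_apply' (⇑α) k x).symm
  have hmoveS' : ∀ (h : C(X, ℂ)) (k : ℕ) (b : B),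
      p h * (Sb k * b) = Sb k * (p (h.comp ⟨(⇑α)^[k], α.continuous.iterate k⟩) * b) := by
    intro h k b
    rw [← mul_assoc, hmoveS, mul_assoc]
  set nr : ℕ → C(X, ℂ) := fun n => toC (gg n * gg n) with hnr
  have hprr : ∀ n, star (t (ξr n)) * t (ξr n) = p (nr n) := by
    intro n
    apply hrep.inner_right
    intro x
    rw [hinner n x]
    simp only [hnr, toC, ContinuousMap.coe_mk, ContinuousMap.mul_apply]
    push_cast
    ring
  have hprr' : ∀ n (b : B), star (t (ξr n)) * (t (ξr n) * b) = p (nr n) * b := by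
    intro n b
    rw [← mul_assoc, hprr]
  have hpmul' : ∀ (g1 g2 : C(X, ℂ)) (b : B), p g1 * (p g2 * b) = p (g1 * g2) * b := by
    intro g1 g2 b
    rw [← mul_assoc, ← map_mul]
  -- the key pointwise product absorption
  have habs : ∀ (k : ℕ), k < N → ∀ (w : C(X, ℝ)), (∀ x, f x = 0 → w x = 0) →
      (nr k).comp ⟨(⇑α)^[k], α.continuous.iterate k⟩ * toC w = toC w := by
    intro k hk w hw
    apply ContinuousMap.ext
    intro x
    simp only [ContinuousMap.mul_apply, ContinuousMap.comp_apply, hnr, toC,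
      ContinuousMap.coe_mk, ContinuousMap.mul_apply]
    by_cases hfx : f x = 0
    · rw [hw x hfx]
      simp
    · have h1 : gg k ((⇑α)^[k] x) = 1 := by
        apply hgone' k hk
        rw [hinv' k x]
        exact hfx
      rw [h1]
      norm_num
  -- Claim A
  have claimA : ∀ (k : ℕ), k ≤ N → ∀ (w : C(X, ℝ)), (∀ x, f x = 0 → w x = 0) →
      star (Sb k) * (Sb k * p (toC w)) = p (toC w) := by
    intro k
    induction k with
    | zero => intro _ w hw; rw [hSb0]; simp
    | succ k ih =>
      intro hk w hw
      have hkN : k < N := hk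
      have e1 : star (Sb (k + 1)) * (Sb (k + 1) * p (toC w))
          = star (Sb k) * (star (t (ξr k)) * (t (ξr k) * (Sb k * p (toC w)))) := by
        rw [hSbsucc, star_mul]
        simp only [mul_assoc]
      rw [e1, hprr' k, hmoveS' (nr k) k, ← map_mul, habs k hkN w hw]
      exact ih (le_of_lt hk) w hw
  -- Claim B
  have claimB : ∀ (k : ℕ), k ≤ N →
      Sb k * (p (toC f) * star (Sb k))
        = p ((toC f).comp ⟨(⇑α.symm)^[k], α.symm.continuous.iterate k⟩) := by
    intro k
    induction k with
    | zero =>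
      intro _
      rw [hSb0]
      simp only [one_mul, star_one, mul_one]
      exact congrArg p (ContinuousMap.ext fun x => rfl)
    | succ k ih =>
      intro hk
      have hkN : k < N := hk
      have ihk := ih (le_of_lt hk)
      have ihb : ∀ b : B, Sb k * (p (toC f) * (star (Sb k) * b))
          = p ((toC f).comp ⟨(⇑α.symm)^[k], α.symm.continuous.iterate k⟩) * b := by
        intro b
        rw [show Sb k * (p (toC f) * (star (Sb k) * b))
            = (Sb k * (p (toC f) * star (Sb k))) * b by simp only [mul_assoc], ihk]
      have e1 : Sb (k + 1) * (p (toC f) * star (Sb (k + 1)))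
          = t (ξr k) * (Sb k * (p (toC f) * (star (Sb k) * star (t (ξr k))))) := by
        rw [hSbsucc, star_mul]
        simp only [mul_assoc]
      rw [e1, ihb (star (t (ξr k)))]
      have hract := hrep.right_act
        ((toC f).comp ⟨(⇑α.symm)^[k], α.symm.continuous.iterate k⟩) (ξr k)
        (sm ((toC f).comp ⟨(⇑α.symm)^[k], α.symm.continuous.iterate k⟩) (ξr k)) (fun x => rfl)
      rw [← mul_assoc, ← hract]
      apply hrep.inner_left
      intro x
      show (inner ℂ ((ξr k).1 (α.symm x))
        (((toC f).comp ⟨(⇑α.symm)^[k], α.symm.continuous.iterate k⟩) (α.symm x)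
          • (ξr k).1 (α.symm x)) : ℂ) = _
      rw [inner_smul_right, hinner k (α.symm x)]
      simp only [ContinuousMap.comp_apply, ContinuousMap.coe_mk, toC]
      rw [Function.iterate_succ_apply]
      by_cases hfx : f ((⇑α.symm)^[k] (α.symm x)) = 0
      · rw [hfx]; simp
      · rw [hgone' k hkN (α.symm x) hfx]; norm_num
  -- the 2N-th root and the sections in ℰ_Y
  have hNne : (N : ℝ) ≠ 0 := Nat.cast_ne_zero.mpr (by omega)
  have hqpos : (0 : ℝ) < (2 * (N : ℝ))⁻¹ := by positivity
  set G : C(X, ℝ) := ⟨fun x => f x ^ ((2 * (N : ℝ))⁻¹ : ℝ),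
    (Real.continuous_rpow_const hqpos.le).comp f.continuous⟩ with hG
  set η : ℕ → Sect V := fun n =>
    sm (toC (G.comp ⟨(⇑α.symm)^[n], α.symm.continuous.iterate n⟩)) (ξr n) with hη
  have hηY : ∀ n, ∀ x, α x ∈ Y → (η n).1 x = 0 := by
    intro n x hxY
    show (toC (G.comp ⟨(⇑α.symm)^[n], α.symm.continuous.iterate n⟩)) x • (ξr n).1 x = 0
    by_cases hn : n < N
    · have hf : f ((⇑α.symm)^[n] x) = 0 := by
        have h1 := hvan (n + 1) (Nat.succ_le_succ (Nat.zero_le n)) hn (α x) hxY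
        rwa [Function.iterate_succ_apply, α.symm_apply_apply] at h1
      have : (toC (G.comp ⟨(⇑α.symm)^[n], α.symm.continuous.iterate n⟩)) x = 0 := by
        simp only [toC, ContinuousMap.coe_mk, ContinuousMap.comp_apply, hG, hf,
          Complex.ofReal_eq_zero]
        exact Real.zero_rpow hqpos.ne'
      rw [this, zero_smul]
    · have : (ξr n).1 x = 0 := congrArg (fun z : Sect V => z.1 x) (dif_neg hn)
      rw [this, smul_zero]
  -- Claim M
  have claimM : ∀ (k : ℕ), prodDown (fun i => t (η i)) k = Sb k * (p (toC G)) ^ k := by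
    intro k
    induction k with
    | zero => rw [hSb0]; simp [prodDown]
    | succ k ih =>
      have h1 : prodDown (fun i => t (η i)) (k + 1) = t (η k) * prodDown (fun i => t (η i)) k :=
        rfl
      have h2 : t (η k) = t (ξr k)
          * p (toC (G.comp ⟨(⇑α.symm)^[k], α.symm.continuous.iterate k⟩)) :=
        hrep.right_act _ (ξr k) (η k) (fun x => rfl)
      have h3 : (toC (G.comp ⟨(⇑α.symm)^[k], α.symm.continuous.iterate k⟩)).comp
          ⟨(⇑α)^[k], α.continuous.iterate k⟩ = toC G := by
        apply ContinuousMap.ext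
        intro x
        simp only [ContinuousMap.comp_apply, toC, ContinuousMap.coe_mk]
        rw [hinv' k x]
      rw [h1, ih, h2, mul_assoc, hmoveS', h3, ← mul_assoc (t (ξr k)), ← hSbsucc,
        ← pow_succ']
  have hGN : (p (toC G)) ^ N
      = p (toC ⟨fun x => Real.sqrt (f x), Real.continuous_sqrt.comp f.continuous⟩) := by
    rw [← map_pow]
    congr 1
    apply ContinuousMap.ext
    intro x
    simp only [ContinuousMap.pow_apply, toC, ContinuousMap.coe_mk, hG]
    rw [← Complex.ofReal_pow]
    congr 1
    rw [← Real.rpow_natCast (f x ^ ((2 * (N : ℝ))⁻¹ : ℝ)) N, ← Real.rpow_mul (hf0' x),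
      Real.sqrt_eq_rpow]
    congr 1
    field_simp
  -- local unit identities
  refine ⟨fun i => ξr i, fun i => ?_, ?_⟩
  · constructor
    · rw [hprr, ← map_mul]
      congr 1
      apply ContinuousMap.ext
      intro x
      simp only [ContinuousMap.mul_apply, ContinuousMap.comp_apply, hnr, toC,
        ContinuousMap.coe_mk]
      by_cases hfx : f ((⇑α.symm)^[(i : ℕ)] x) = 0
      · rw [hfx]; simp
      · rw [hgone' i i.isLt x hfx]; norm_num
    · have hleft := hrep.inner_left (ξr i) (ξr i)
        ((nr i).comp ⟨⇑α.symm, α.symm.continuous⟩) (fun x => by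
          rw [hinner i (α.symm x)]
          simp only [ContinuousMap.comp_apply, ContinuousMap.coe_mk, hnr, toC,
            ContinuousMap.mul_apply]
          push_cast
          ring)
      rw [hleft, ← map_mul]
      congr 1
      apply ContinuousMap.ext
      intro x
      simp only [ContinuousMap.mul_apply, ContinuousMap.comp_apply, hnr, toC,
        ContinuousMap.coe_mk]
      by_cases hfx : f ((⇑α.symm)^[(i : ℕ) + 1] x) = 0
      · rw [hfx]; simp
      · have hfx' : f ((⇑α.symm)^[(i : ℕ)] (α.symm x)) ≠ 0 := by
          rwa [← Function.iterate_succ_apply]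
        rw [hgone' i i.isLt (α.symm x) hfx']
        norm_num
  -- the element a
  intro a ha
  have hofn : (List.ofFn fun i : Fin N => star (t (ξr ↑i))).prod
      = prodUp (fun n => star (t (ξr n))) N := ofFn_prod_eq (fun n => star (t (ξr n))) N
  have hstarSb : star (Sb N) = prodUp (fun n => star (t (ξr n))) N :=
    star_prodDown (fun i => t (ξr i)) N
  set sq : C(X, ℝ) := ⟨fun x => Real.sqrt (f x), Real.continuous_sqrt.comp f.continuous⟩
    with hsq
  have hsqvan : ∀ x, f x = 0 → sq x = 0 := by
    intro x hx
    simp only [hsq, ContinuousMap.coe_mk, hx, Real.sqrt_zero]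
  have hsqstar : star (p (toC sq)) = p (toC sq) := by
    rw [← map_star]
    congr 1
    apply ContinuousMap.ext
    intro x
    simp only [ContinuousMap.star_apply, toC, ContinuousMap.coe_mk]
    exact Complex.conj_ofReal _
  have ha' : a = p (toC sq) * star (Sb N) := by
    rw [ha, hofn, hstarSb]
  have hstara : star a = Sb N * p (toC sq) := by
    rw [ha', star_mul, star_star, hsqstar]
  have hsqsqC : toC sq * toC sq = toC f := by
    apply ContinuousMap.ext
    intro x
    simp only [ContinuousMap.mul_apply, toC, ContinuousMap.coe_mk, hsq]
    rw [← Complex.ofReal_mul, Real.mul_self_sqrt (hf0' x)]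
  refine ⟨?_, ?_, ?_⟩
  · -- membership
    have hmemD : ∀ k, prodDown (fun i => t (η i)) k ∈ StarAlgebra.adjoin ℂ
        (Set.range ⇑p ∪ t '' {ξ : Sect V | ∀ x, α x ∈ Y → ξ.1 x = 0}) := by
      intro k
      induction k with
      | zero => exact one_mem _
      | succ k ih =>
        exact mul_mem (StarAlgebra.subset_adjoin ℂ _ (Or.inr ⟨η k, hηY k, rfl⟩)) ih
    have hstaramem : star a ∈ StarAlgebra.adjoin ℂ
        (Set.range ⇑p ∪ t '' {ξ : Sect V | ∀ x, α x ∈ Y → ξ.1 x = 0}) := by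
      rw [hstara, ← hGN, ← claimM]
      exact hmemD N
    have hamem : a ∈ StarAlgebra.adjoin ℂ
        (Set.range ⇑p ∪ t '' {ξ : Sect V | ∀ x, α x ∈ Y → ξ.1 x = 0}) := by
      rw [← star_star a]
      exact star_mem hstaramem
    show a ∈ (StarAlgebra.adjoin ℂ
      (Set.range ⇑p ∪ t '' {ξ : Sect V | ∀ x, α x ∈ Y → ξ.1 x = 0})).topologicalClosure
    exact StarSubalgebra.le_topologicalClosure _ hamem
  · -- a a* = p f
    calc a * star a = (p (toC sq) * star (Sb N)) * (Sb N * p (toC sq)) := by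
          rw [← ha', ← hstara]
      _ = p (toC sq) * (star (Sb N) * (Sb N * p (toC sq))) := by simp only [mul_assoc]
      _ = p (toC sq) * p (toC sq) := by rw [claimA N le_rfl sq hsqvan]
      _ = p (toC f) := by rw [← map_mul, hsqsqC]
  · -- a* a = p (f ∘ α^{-N})
    calc star a * a = (Sb N * p (toC sq)) * (p (toC sq) * star (Sb N)) := by
          rw [← ha', ← hstara]
      _ = Sb N * (p (toC sq) * (p (toC sq) * star (Sb N))) := by simp only [mul_assoc]
      _ = Sb N * (p (toC f) * star (Sb N)) := by rw [hpmul', hsqsqC]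
      _ = p ((toC f).comp ⟨(⇑α.symm)^[N], α.symm.continuous.iterate N⟩) := claimB N le_rfl
end

section
/- Let X be an infinite compact metric space, α : X → X a minimal homeomorphism, 𝒱 a line bundle, ℰ = Γ(𝒱,α), and Y ⊆ X a nonempty closed subset meeting each α-orbit at most once such that for every N there is an open W_N ⊇ Y with 𝒱|_{α^n(W_N)} trivial for |n| ≤ N. Then for any nonzero positive a, b ∈ C(X) there exists a nonzero positive f ∈ C(X) with f ≾ a and f ≾ b in the Cuntz subequivalence relation of the orbit-breaking algebra O(ℰ_Y). -/
/-- Cuntz subequivalence `x ≾ y` relative to a *-subalgebra `D`. -/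
def CuntzLE {B : Type*} [NormedRing B] [StarRing B] [NormedAlgebra ℂ B] [StarModule ℂ B]
    (D : StarSubalgebra ℂ B) (x y : B) : Prop :=
  ∀ ε > (0:ℝ), ∃ r ∈ D, ‖r * y * star r - x‖ < ε

section Aux

open Bundle Set

/-- A scalar multiple (by a function supported inside `W`) of a section of a vector bundle
which is continuous on the open set `W` is a globally continuous section. -/
lemma sect_smul {X : Type*} [TopologicalSpace X] (V : X → Type*)
    [∀ x, NormedAddCommGroup (V x)] [∀ x, InnerProductSpace ℂ (V x)]
    [TopologicalSpace (Bundle.TotalSpace ℂ V)] [FiberBundle ℂ V] [VectorBundle ℂ ℂ V]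
    {W : Set X} (hW : IsOpen W) {s : ∀ x, V x}
    (hs : ContinuousOn (fun x => (Bundle.TotalSpace.mk x (s x) : Bundle.TotalSpace ℂ V)) W)
    {c : X → ℂ} (hc : Continuous c) (hsupp : tsupport c ⊆ W) :
    Continuous fun x => (Bundle.TotalSpace.mk x (c x • s x) : Bundle.TotalSpace ℂ V) := by
  rw [continuous_iff_continuousAt]
  intro x₀
  rw [FiberBundle.continuousAt_totalSpace]
  refine ⟨continuousAt_id, ?_⟩
  by_cases hx₀ : x₀ ∈ W
  · set e := trivializationAt ℂ V x₀ with he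
    have hbase : x₀ ∈ e.baseSet := FiberBundle.mem_baseSet_trivializationAt ℂ V x₀
    have hmemnhds : W ∩ e.baseSet ∈ nhds x₀ :=
      (hW.inter e.open_baseSet).mem_nhds ⟨hx₀, hbase⟩
    have heq : (fun x => (e (Bundle.TotalSpace.mk x (c x • s x))).2)
        =ᶠ[nhds x₀] fun x => c x • (e (Bundle.TotalSpace.mk x (s x))).2 := by
      filter_upwards [hmemnhds] with x hx
      have hb : x ∈ e.baseSet := hx.2
      have h1 : (e (Bundle.TotalSpace.mk x (c x • s x))).2
          = e.linearMapAt ℂ x (c x • s x) := by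
        rw [Trivialization.coe_linearMapAt_of_mem e hb]
      have h2 : (e (Bundle.TotalSpace.mk x (s x))).2 = e.linearMapAt ℂ x (s x) := by
        rw [Trivialization.coe_linearMapAt_of_mem e hb]
      rw [h1, h2, map_smul]
    refine ContinuousAt.congr ?_ heq.symm
    refine ContinuousAt.smul hc.continuousAt ?_
    have hsec : ContinuousAt
        (fun x => (Bundle.TotalSpace.mk x (s x) : Bundle.TotalSpace ℂ V)) x₀ :=
      hs.continuousAt (hW.mem_nhds hx₀)
    have hesrc : (Bundle.TotalSpace.mk x₀ (s x₀) : Bundle.TotalSpace ℂ V) ∈ e.source := by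
      rw [e.mem_source]; exact hbase
    have hcts : ContinuousAt (⇑e) (Bundle.TotalSpace.mk x₀ (s x₀)) :=
      e.continuousOn.continuousAt (e.open_source.mem_nhds hesrc)
    have h3 : ContinuousAt (fun x => e (Bundle.TotalSpace.mk x (s x))) x₀ :=
      ContinuousAt.comp hcts hsec
    exact continuous_snd.continuousAt.comp h3
  · have hx₀' : x₀ ∉ tsupport c := fun h => hx₀ (hsupp h)
    set e := trivializationAt ℂ V x₀ with he
    have hbase : x₀ ∈ e.baseSet := FiberBundle.mem_baseSet_trivializationAt ℂ V x₀
    have hmemnhds : (tsupport c)ᶜ ∩ e.baseSet ∈ nhds x₀ :=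
      ((isClosed_tsupport c).isOpen_compl.inter e.open_baseSet).mem_nhds ⟨hx₀', hbase⟩
    have heq : (fun x => (e (Bundle.TotalSpace.mk x (c x • s x))).2)
        =ᶠ[nhds x₀] fun _ => (0 : ℂ) := by
      filter_upwards [hmemnhds] with x hx
      have hcx : c x = 0 := image_eq_zero_of_notMem_tsupport hx.1
      have hz : (Bundle.TotalSpace.mk x (c x • s x) : Bundle.TotalSpace ℂ V)
          = Bundle.zeroSection ℂ V x := by
        rw [hcx, zero_smul]; rfl
      rw [hz, e.zeroSection ℂ hx.2]
    exact ContinuousAt.congr continuousAt_const heq.symm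

variable {X : Type*} [MetricSpace X] [CompactSpace X] (α : X ≃ₜ X)

lemma fwd_dense (hmin : ∀ E : Set X, IsClosed E → (⇑α) '' E ⊆ E → E = ∅ ∨ E = Set.univ)
    (z : X) {U : Set X} (hU : IsOpen U) (hUne : U.Nonempty) :
    ∃ n : ℕ, 1 ≤ n ∧ (⇑α)^[n] z ∈ U := by
  set S : Set X := {w | ∃ n : ℕ, 1 ≤ n ∧ (⇑α)^[n] z = w} with hS
  have hsub : (⇑α) '' S ⊆ S := by
    rintro _ ⟨w, ⟨n, hn, rfl⟩, rfl⟩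
    exact ⟨n + 1, by omega, by rw [Function.iterate_succ_apply']⟩
  have hcl : (⇑α) '' closure S ⊆ closure S :=
    (image_closure_subset_closure_image α.continuous).trans (closure_mono hsub)
  rcases hmin (closure S) isClosed_closure hcl with h | h
  · have hmem : α z ∈ closure S := subset_closure ⟨1, le_refl 1, rfl⟩
    rw [h] at hmem
    exact absurd hmem (notMem_empty _)
  · have hdense : Dense S := by rw [dense_iff_closure_eq]; exact h
    obtain ⟨x, hxS, hxU⟩ := hdense.exists_mem_open hU hUne
    obtain ⟨n, hn, rfl⟩ := hxS
    exact ⟨n, hn, hxU⟩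

lemma min_inv (hmin : ∀ E : Set X, IsClosed E → (⇑α) '' E ⊆ E → E = ∅ ∨ E = Set.univ)
    (E : Set X) (hE : IsClosed E) (hinv : (⇑α.symm) '' E ⊆ E) : E = ∅ ∨ E = Set.univ := by
  rcases E.eq_empty_or_nonempty with h | hne
  · exact Or.inl h
  right
  set F : Set X := ⋂ n : ℕ, (⇑α)^[n] ⁻¹' E with hF
  have hFcl : IsClosed F :=
    isClosed_iInter fun n => hE.preimage (α.continuous.iterate n)
  have hpre : ∀ x, x ∈ E → α.symm x ∈ E := fun x hx => hinv ⟨x, hx, rfl⟩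
  have hmono : ∀ n : ℕ, (⇑α)^[n+1] ⁻¹' E ⊆ (⇑α)^[n] ⁻¹' E := by
    intro n x hx
    have hmem : α.symm ((⇑α)^[n+1] x) ∈ E := hpre _ hx
    rwa [Function.iterate_succ_apply', Homeomorph.symm_apply_apply] at hmem
  have hFne : F.Nonempty := by
    apply IsCompact.nonempty_iInter_of_sequence_nonempty_isCompact_isClosed
    · exact hmono
    · intro n
      obtain ⟨x, hx⟩ := hne
      exact ⟨(⇑α.symm)^[n] x, by
        simp only [Set.mem_preimage]
        rwa [Function.RightInverse.iterate (fun y => α.apply_symm_apply y) n x]⟩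
    · exact IsCompact.of_isClosed_subset isCompact_univ
        (hE.preimage (α.continuous.iterate 0)) (Set.subset_univ _)
    · exact fun n => hE.preimage (α.continuous.iterate n)
  have hFinv : (⇑α) '' F ⊆ F := by
    rintro _ ⟨x, hx, rfl⟩
    rw [Set.mem_iInter]
    intro n
    have hmem := (Set.mem_iInter.mp hx) (n + 1)
    simpa [Function.iterate_succ_apply] using hmem
  rcases hmin F hFcl hFinv with h | h
  · exact absurd h (by rw [← ne_eq, ← Set.nonempty_iff_ne_empty]; exact hFne)
  · have hFE : F ⊆ E := by
      intro x hx
      have hmem := (Set.mem_iInter.mp hx) 0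
      simpa using hmem
    rw [Set.eq_univ_iff_forall]
    exact fun x => hFE (h ▸ Set.mem_univ x)

lemma bwd_dense (hmin : ∀ E : Set X, IsClosed E → (⇑α) '' E ⊆ E → E = ∅ ∨ E = Set.univ)
    (z : X) {U : Set X} (hU : IsOpen U) (hUne : U.Nonempty) :
    ∃ n : ℕ, 1 ≤ n ∧ (⇑α.symm)^[n] z ∈ U := by
  set S : Set X := {w | ∃ n : ℕ, 1 ≤ n ∧ (⇑α.symm)^[n] z = w} with hS
  have hsub : (⇑α.symm) '' S ⊆ S := by
    rintro _ ⟨w, ⟨n, hn, rfl⟩, rfl⟩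
    exact ⟨n + 1, by omega, by rw [Function.iterate_succ_apply']⟩
  have hcl : (⇑α.symm) '' closure S ⊆ closure S :=
    (image_closure_subset_closure_image α.symm.continuous).trans (closure_mono hsub)
  rcases min_inv α hmin (closure S) isClosed_closure hcl with h | h
  · have hmem : α.symm z ∈ closure S := subset_closure ⟨1, le_refl 1, rfl⟩
    rw [h] at hmem
    exact absurd hmem (notMem_empty _)
  · have hdense : Dense S := by rw [dense_iff_closure_eq]; exact h
    obtain ⟨x, hxS, hxU⟩ := hdense.exists_mem_open hU hUne
    obtain ⟨n, hn, rfl⟩ := hxS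
    exact ⟨n, hn, hxU⟩

end Aux

section Step

open Bundle Set

variable {X : Type*} [MetricSpace X] [CompactSpace X]
    {α : X ≃ₜ X}
    {V : X → Type*} [∀ x, NormedAddCommGroup (V x)] [∀ x, InnerProductSpace ℂ (V x)]
    [TopologicalSpace (Bundle.TotalSpace ℂ V)] [FiberBundle ℂ V] [VectorBundle ℂ ℂ V]
    {B : Type*} [NormedRing B] [StarRing B] [NormedAlgebra ℂ B]
    {p : C(X, ℂ) →⋆ₐ[ℂ] B} {t : Sect V → B}
    {Y : Set X}

/-- One backward step: conjugation by `star (t ξ)` turns `p (toC c)` into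
`p (toC c')` with `c' q = c (α q)`. -/
lemma stepB (hrep : IsCovRep α V B p t) (hYcl : IsClosed Y)
    {W : Set X} (hW : IsOpen W) {s : ∀ x, V x}
    (hs : ContinuousOn (fun x => (Bundle.TotalSpace.mk x (s x) : Bundle.TotalSpace ℂ V)) W)
    (hnorm : ∀ x ∈ W, ‖s x‖ = 1)
    {q : X} (hq : q ∈ W) (hqY : α q ∉ Y) (c : C(X, ℝ)) :
    ∃ ξ : Sect V, (∀ x, α x ∈ Y → ξ.1 x = 0) ∧ ∃ c' : C(X, ℝ),
      (0 ≤ c → 0 ≤ c') ∧ c' q = c (α q) ∧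
      star (t ξ) * p (toC c) * t ξ = p (toC c') := by
  classical
  set O : Set X := W ∩ (⇑α) ⁻¹' Yᶜ with hO
  have hOopen : IsOpen O := hW.inter (hYcl.isOpen_compl.preimage α.continuous)
  have hqO : q ∈ O := ⟨hq, hqY⟩
  obtain ⟨φ, hφsupp, hφone, hφmem⟩ :=
    exists_tsupport_one_of_isOpen_isClosed hOopen
      (IsCompact.of_isClosed_subset isCompact_univ isClosed_closure (Set.subset_univ _))
      isClosed_singleton (Set.singleton_subset_iff.mpr hqO)
  have hφq : φ q = 1 := hφone rfl
  have hsect : ∀ u : C(X, ℝ), Continuous fun x =>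
      (Bundle.TotalSpace.mk x ((((u x * φ x : ℝ)) : ℂ) • s x) : Bundle.TotalSpace ℂ V) := by
    intro u
    apply sect_smul V hW hs (by fun_prop)
    refine subset_trans (closure_mono ?_) (subset_trans hφsupp (Set.inter_subset_left))
    intro x hx
    simp only [Function.mem_support, ne_eq, Complex.ofReal_eq_zero] at hx ⊢
    intro h0
    exact hx (by rw [h0, mul_zero])
  have hφY : ∀ x, α x ∈ Y → φ x = 0 := by
    intro x hx
    by_contra h0
    have hmem : x ∈ tsupport φ := subset_closure (by simpa [Function.mem_support] using h0)
    exact (hφsupp hmem).2 hx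
  set ξ : Sect V := ⟨fun x => ((φ x : ℝ) : ℂ) • s x, by
    have := hsect 1
    simpa using this⟩ with hξ
  have hvanish : ∀ x, α x ∈ Y → ξ.1 x = 0 := by
    intro x hx
    show ((φ x : ℝ) : ℂ) • s x = 0
    rw [hφY x hx]
    simp
  refine ⟨ξ, hvanish, ?_⟩
  set cc : C(X, ℝ) := c.comp ⟨⇑α, α.continuous⟩ with hcc
  set η : Sect V := ⟨fun x => (((cc x * φ x : ℝ)) : ℂ) • s x, hsect cc⟩ with hη
  have hact : t η = p (toC c) * t ξ := by
    apply hrep.left_act (toC c) ξ η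
    intro x
    show (((cc x * φ x : ℝ)) : ℂ) • s x = ((c (α x) : ℝ) : ℂ) • (((φ x : ℝ) : ℂ) • s x)
    rw [smul_smul]
    push_cast
    rfl
  set c' : C(X, ℝ) := cc * (φ * φ) with hc'
  have hinner : star (t ξ) * t η = p (toC c') := by
    apply hrep.inner_right ξ η (toC c')
    intro x
    show (inner ℂ (((φ x : ℝ) : ℂ) • s x) ((((cc x * φ x : ℝ)) : ℂ) • s x) : ℂ)
      = ((cc x * (φ x * φ x) : ℝ) : ℂ)
    rw [inner_smul_left, inner_smul_right]
    by_cases h0 : φ x = 0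
    · rw [h0]; push_cast; ring
    · have hxW : x ∈ W := by
        have hmem : x ∈ tsupport φ :=
          subset_closure (by simpa [Function.mem_support] using h0)
        exact (hφsupp hmem).1
      have hone : (inner ℂ (s x) (s x) : ℂ) = 1 := by
        rw [inner_self_eq_norm_sq_to_K, hnorm x hxW]
        norm_num
      rw [hone, Complex.conj_ofReal]
      push_cast; ring
  refine ⟨c', ?_, ?_, ?_⟩
  · intro hc0 x
    have h1 : (0:ℝ) ≤ c (α x) := hc0 (α x)
    have h2 : (0:ℝ) ≤ φ x * φ x := mul_self_nonneg _
    simpa [hc', hcc] using mul_nonneg h1 h2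
  · show cc q * (φ q * φ q) = c (α q)
    rw [hφq]
    simp [hcc]
  · rw [mul_assoc, ← hact, hinner]

/-- One forward step: conjugation by `t ξ` turns `p (toC c)` into
`p (toC c')` with `c' (α q) = c q`. -/
lemma stepF (hrep : IsCovRep α V B p t) (hYcl : IsClosed Y)
    {W : Set X} (hW : IsOpen W) {s : ∀ x, V x}
    (hs : ContinuousOn (fun x => (Bundle.TotalSpace.mk x (s x) : Bundle.TotalSpace ℂ V)) W)
    (hnorm : ∀ x ∈ W, ‖s x‖ = 1)
    {q : X} (hq : q ∈ W) (hqY : α q ∉ Y) (c : C(X, ℝ)) :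
    ∃ ξ : Sect V, (∀ x, α x ∈ Y → ξ.1 x = 0) ∧ ∃ c' : C(X, ℝ),
      (0 ≤ c → 0 ≤ c') ∧ c' (α q) = c q ∧
      t ξ * p (toC c) * star (t ξ) = p (toC c') := by
  classical
  set O : Set X := W ∩ (⇑α) ⁻¹' Yᶜ with hO
  have hOopen : IsOpen O := hW.inter (hYcl.isOpen_compl.preimage α.continuous)
  have hqO : q ∈ O := ⟨hq, hqY⟩
  obtain ⟨φ, hφsupp, hφone, hφmem⟩ :=
    exists_tsupport_one_of_isOpen_isClosed hOopen
      (IsCompact.of_isClosed_subset isCompact_univ isClosed_closure (Set.subset_univ _))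
      isClosed_singleton (Set.singleton_subset_iff.mpr hqO)
  have hφq : φ q = 1 := hφone rfl
  have hsect : ∀ u : C(X, ℝ), Continuous fun x =>
      (Bundle.TotalSpace.mk x ((((u x * φ x : ℝ)) : ℂ) • s x) : Bundle.TotalSpace ℂ V) := by
    intro u
    apply sect_smul V hW hs (by fun_prop)
    refine subset_trans (closure_mono ?_) (subset_trans hφsupp (Set.inter_subset_left))
    intro x hx
    simp only [Function.mem_support, ne_eq, Complex.ofReal_eq_zero] at hx ⊢
    intro h0
    exact hx (by rw [h0, mul_zero])
  have hφY : ∀ x, α x ∈ Y → φ x = 0 := by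
    intro x hx
    by_contra h0
    have hmem : x ∈ tsupport φ := subset_closure (by simpa [Function.mem_support] using h0)
    exact (hφsupp hmem).2 hx
  set ξ : Sect V := ⟨fun x => ((φ x : ℝ) : ℂ) • s x, by
    have := hsect 1
    simpa using this⟩ with hξ
  have hvanish : ∀ x, α x ∈ Y → ξ.1 x = 0 := by
    intro x hx
    show ((φ x : ℝ) : ℂ) • s x = 0
    rw [hφY x hx]
    simp
  refine ⟨ξ, hvanish, ?_⟩
  set η : Sect V := ⟨fun x => (((c x * φ x : ℝ)) : ℂ) • s x, hsect c⟩ with hη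
  have hact : t η = t ξ * p (toC c) := by
    apply hrep.right_act (toC c) ξ η
    intro x
    show (((c x * φ x : ℝ)) : ℂ) • s x = ((c x : ℝ) : ℂ) • (((φ x : ℝ) : ℂ) • s x)
    rw [smul_smul]
    push_cast
    rfl
  set c' : C(X, ℝ) := (c * (φ * φ)).comp ⟨⇑α.symm, α.symm.continuous⟩ with hc'
  have hinner : t η * star (t ξ) = p (toC c') := by
    apply hrep.inner_left η ξ (toC c')
    intro x
    show (inner ℂ (((φ (α.symm x) : ℝ) : ℂ) • s (α.symm x))
        (((c (α.symm x) * φ (α.symm x) : ℝ) : ℂ) • s (α.symm x)) : ℂ)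
      = ((c (α.symm x) * (φ (α.symm x) * φ (α.symm x)) : ℝ) : ℂ)
    rw [inner_smul_left, inner_smul_right]
    by_cases h0 : φ (α.symm x) = 0
    · rw [h0]; push_cast; ring
    · have hxW : α.symm x ∈ W := by
        have hmem : α.symm x ∈ tsupport φ :=
          subset_closure (by simpa [Function.mem_support] using h0)
        exact (hφsupp hmem).1
      have hone : (inner ℂ (s (α.symm x)) (s (α.symm x)) : ℂ) = 1 := by
        rw [inner_self_eq_norm_sq_to_K, hnorm _ hxW]
        norm_num
      rw [hone, Complex.conj_ofReal]
      push_cast; ring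
  refine ⟨c', ?_, ?_, ?_⟩
  · intro hc0 x
    have h1 : (0:ℝ) ≤ c (α.symm x) := hc0 (α.symm x)
    have h2 : (0:ℝ) ≤ φ (α.symm x) * φ (α.symm x) := mul_self_nonneg _
    simpa [hc'] using mul_nonneg h1 h2
  · show (c * (φ * φ)) (α.symm (α q)) = c q
    rw [Homeomorph.symm_apply_apply]
    simp [hφq]
  · rw [← hact, hinner]

end Step

theorem statement16
    (X : Type*) [MetricSpace X] [CompactSpace X] [Infinite X]
    (α : X ≃ₜ X)
    -- α is minimal
    (hmin : ∀ E : Set X, IsClosed E → (⇑α) '' E ⊆ E → E = ∅ ∨ E = Set.univ)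
    (V : X → Type*) [∀ x, NormedAddCommGroup (V x)] [∀ x, InnerProductSpace ℂ (V x)]
    [TopologicalSpace (Bundle.TotalSpace ℂ V)] [FiberBundle ℂ V] [VectorBundle ℂ ℂ V]
    (B : Type*) [NormedRing B] [StarRing B] [CStarRing B] [NormedAlgebra ℂ B]
    [StarModule ℂ B] [ContinuousStar B] [CompleteSpace B]
    (p : C(X, ℂ) →⋆ₐ[ℂ] B) (t : Sect V → B)
    (hrep : IsCovRep α V B p t)
    (Y : Set X) (hYne : Y.Nonempty) (hYcl : IsClosed Y)
    -- Y meets each α-orbit at most once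
    (horbit : ∀ n : ℕ, 0 < n → ∀ y ∈ Y, (⇑α)^[n] y ∉ Y)
    -- for each N there is an open W ⊇ Y with 𝒱 trivial over αⁿ(W), |n| ≤ N
    (htriv : ∀ N : ℕ, ∃ W : Set X, IsOpen W ∧ Y ⊆ W ∧
      ∀ n ≤ N, TrivialOver V ((⇑α)^[n] '' W) ∧ TrivialOver V ((⇑α.symm)^[n] '' W))
    -- a, b nonzero positive elements of C(X)
    (a b : C(X, ℝ)) (ha0 : 0 ≤ a) (ha : a ≠ 0) (hb0 : 0 ≤ b) (hb : b ≠ 0) :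
    ∃ f : C(X, ℝ), 0 ≤ f ∧ f ≠ 0 ∧
      CuntzLE (OBalg α V B p t Y) (p (toC f)) (p (toC a)) ∧
      CuntzLE (OBalg α V B p t Y) (p (toC f)) (p (toC b)) := by
  classical
  obtain ⟨y₀, hy₀⟩ := hYne
  set Ua : Set X := {x | 0 < a x} with hUa
  set Ub : Set X := {x | 0 < b x} with hUb
  have hUaopen : IsOpen Ua := isOpen_lt continuous_const a.continuous
  have hUbopen : IsOpen Ub := isOpen_lt continuous_const b.continuous
  have ha0' : ∀ x, 0 ≤ a x := fun x => ContinuousMap.le_def.mp ha0 x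
  have hb0' : ∀ x, 0 ≤ b x := fun x => ContinuousMap.le_def.mp hb0 x
  have hUane : Ua.Nonempty := by
    by_contra h
    rw [Set.not_nonempty_iff_eq_empty] at h
    apply ha
    ext x
    have h1 : x ∉ Ua := by rw [h]; exact Set.notMem_empty x
    have h2 : ¬ (0 < a x) := h1
    have := ha0' x
    simp only [ContinuousMap.zero_apply]
    linarith
  have hUbne : Ub.Nonempty := by
    by_contra h
    rw [Set.not_nonempty_iff_eq_empty] at h
    apply hb
    ext x
    have h1 : x ∉ Ub := by rw [h]; exact Set.notMem_empty x
    have h2 : ¬ (0 < b x) := h1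
    have := hb0' x
    simp only [ContinuousMap.zero_apply]
    linarith
  obtain ⟨m, hm1, hma⟩ := fwd_dense α hmin y₀ hUaopen hUane
  obtain ⟨k, hk1, hkb⟩ := bwd_dense α hmin y₀ hUbopen hUbne
  obtain ⟨W, hWopen, hYW, htr⟩ := htriv (max m k)
  have hiter_inv₁ : ∀ n : ℕ, Function.LeftInverse ((⇑α.symm)^[n]) ((⇑α)^[n]) :=
    fun n => Function.LeftInverse.iterate (fun y => α.symm_apply_apply y) n
  have hiter_inv₂ : ∀ n : ℕ, Function.LeftInverse ((⇑α)^[n]) ((⇑α.symm)^[n]) :=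
    fun n => Function.LeftInverse.iterate (fun y => α.apply_symm_apply y) n
  have himgFopen : ∀ n : ℕ, IsOpen ((⇑α)^[n] '' W) := by
    intro n
    have heq : (⇑α)^[n] '' W = (⇑α.symm)^[n] ⁻¹' W := by
      ext x
      constructor
      · rintro ⟨w, hw, rfl⟩
        rw [Set.mem_preimage, hiter_inv₁ n w]
        exact hw
      · intro hx
        exact ⟨(⇑α.symm)^[n] x, hx, hiter_inv₂ n x⟩
    rw [heq]
    exact hWopen.preimage (α.symm.continuous.iterate n)
  have himgBopen : ∀ n : ℕ, IsOpen ((⇑α.symm)^[n] '' W) := by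
    intro n
    have heq : (⇑α.symm)^[n] '' W = (⇑α)^[n] ⁻¹' W := by
      ext x
      constructor
      · rintro ⟨w, hw, rfl⟩
        rw [Set.mem_preimage, hiter_inv₂ n w]
        exact hw
      · intro hx
        exact ⟨(⇑α)^[n] x, hx, hiter_inv₁ n x⟩
    rw [heq]
    exact hWopen.preimage (α.continuous.iterate n)
  -- the open set of good base points
  set O : Set X := (W ∩ (fun x => (⇑α)^[m] x) ⁻¹' Ua ∩ (fun x => (⇑α.symm)^[k] x) ⁻¹' Ub)
      ∩ ((⋂ j ∈ Finset.Icc 1 m, (⇑α)^[j] ⁻¹' Yᶜ)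
        ∩ ⋂ j ∈ Finset.Icc 1 (k-1), (⇑α.symm)^[j] ⁻¹' Yᶜ) with hOdef
  have hOopen : IsOpen O := by
    refine IsOpen.inter (IsOpen.inter (IsOpen.inter hWopen ?_) ?_) (IsOpen.inter ?_ ?_)
    · exact hUaopen.preimage (α.continuous.iterate m)
    · exact hUbopen.preimage (α.symm.continuous.iterate k)
    · exact isOpen_biInter_finset fun j _ =>
        (hYcl.isOpen_compl).preimage (α.continuous.iterate j)
    · exact isOpen_biInter_finset fun j _ =>
        (hYcl.isOpen_compl).preimage (α.symm.continuous.iterate j)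
  have hy₀O : y₀ ∈ O := by
    refine ⟨⟨⟨hYW hy₀, hma⟩, hkb⟩, ?_, ?_⟩
    · rw [Set.mem_iInter₂]
      intro j hj
      obtain ⟨hj1, hj2⟩ := Finset.mem_Icc.mp hj
      exact horbit j (by omega) y₀ hy₀
    · rw [Set.mem_iInter₂]
      intro j hj
      obtain ⟨hj1, hj2⟩ := Finset.mem_Icc.mp hj
      intro hmem
      have hY' : (⇑α)^[j] ((⇑α.symm)^[j] y₀) ∉ Y := horbit j (by omega) _ hmem
      rw [hiter_inv₂ j y₀] at hY'
      exact hY' hy₀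
  have hOnotY : ¬ O ⊆ Y := by
    intro hsub
    obtain ⟨n, hn, hnO⟩ := fwd_dense α hmin y₀ hOopen ⟨y₀, hy₀O⟩
    exact horbit n (by omega) y₀ hy₀ (hsub hnO)
  obtain ⟨x₀, hx₀O, hx₀Y⟩ := Set.not_subset.mp hOnotY
  obtain ⟨⟨⟨hxW, hxa⟩, hxb⟩, hxF, hxB⟩ := hx₀O
  have hxa' : 0 < a ((⇑α)^[m] x₀) := hxa
  have hxb' : 0 < b ((⇑α.symm)^[k] x₀) := hxb
  have hfY : ∀ j, 1 ≤ j → j ≤ m → (⇑α)^[j] x₀ ∉ Y := by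
    intro j h1 h2
    exact Set.mem_iInter₂.mp hxF j (Finset.mem_Icc.mpr ⟨h1, h2⟩)
  have hbY : ∀ j, j ≤ k - 1 → (⇑α.symm)^[j] x₀ ∉ Y := by
    intro j hj
    rcases Nat.eq_zero_or_pos j with rfl | hpos
    · simpa using hx₀Y
    · exact Set.mem_iInter₂.mp hxB j (Finset.mem_Icc.mpr ⟨hpos, hj⟩)
  -- the generating set
  set gens : Set B := Set.range ⇑p ∪ t '' {ξ : Sect V | ∀ x, α x ∈ Y → ξ.1 x = 0} with hgens
  have hpmem : ∀ g : C(X, ℂ), p g ∈ StarAlgebra.adjoin ℂ gens :=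
    fun g => StarAlgebra.subset_adjoin ℂ gens (Or.inl ⟨g, rfl⟩)
  -- backward chain for a
  have chainB : ∀ i, i ≤ m → ∃ r ∈ StarAlgebra.adjoin ℂ gens, ∃ c : C(X, ℝ), 0 ≤ c ∧
      0 < c ((⇑α)^[m - i] x₀) ∧ r * p (toC a) * star r = p (toC c) := by
    intro i
    induction i with
    | zero =>
      intro _
      refine ⟨1, one_mem _, a, ha0, ?_, by rw [one_mul, star_one, mul_one]⟩
      simpa using hxa'
    | succ n ih =>
      intro hn1
      obtain ⟨r, hr, c, hc0, hcpos, hconj⟩ := ih (by omega)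
      obtain ⟨s, hs, hnorm⟩ := (htr (m - (n+1)) (le_trans (by omega) (le_max_left m k))).1
      have hqW : (⇑α)^[m - (n+1)] x₀ ∈ (⇑α)^[m - (n+1)] '' W := Set.mem_image_of_mem _ hxW
      have hstep : α ((⇑α)^[m - (n+1)] x₀) = (⇑α)^[m - n] x₀ := by
        rw [← Function.iterate_succ_apply' (⇑α) (m - (n+1)) x₀]
        congr 1
        omega
      have hqY : α ((⇑α)^[m - (n+1)] x₀) ∉ Y := by
        rw [hstep]
        exact hfY (m - n) (by omega) (by omega)
      obtain ⟨ξ, hvan, c', hpos', hq', hconj'⟩ :=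
        stepB hrep hYcl (himgFopen (m - (n+1))) hs hnorm hqW hqY c
      refine ⟨star (t ξ) * r,
        mul_mem (star_mem (StarAlgebra.subset_adjoin ℂ gens (Or.inr ⟨ξ, hvan, rfl⟩))) hr,
        c', hpos' hc0, ?_, ?_⟩
      · rw [hq', hstep]
        exact hcpos
      · rw [star_mul, star_star]
        have h1 : star (t ξ) * r * p (toC a) * (star r * t ξ)
            = star (t ξ) * (r * p (toC a) * star r) * t ξ := by
          simp only [mul_assoc]
        rw [h1, hconj, hconj']
  -- forward chain for b
  have chainF : ∀ i, i ≤ k → ∃ r ∈ StarAlgebra.adjoin ℂ gens, ∃ c : C(X, ℝ), 0 ≤ c ∧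
      0 < c ((⇑α.symm)^[k - i] x₀) ∧ r * p (toC b) * star r = p (toC c) := by
    intro i
    induction i with
    | zero =>
      intro _
      refine ⟨1, one_mem _, b, hb0, ?_, by rw [one_mul, star_one, mul_one]⟩
      simpa using hxb'
    | succ n ih =>
      intro hn1
      obtain ⟨r, hr, c, hc0, hcpos, hconj⟩ := ih (by omega)
      obtain ⟨s, hs, hnorm⟩ := (htr (k - n) (le_trans (by omega) (le_max_right m k))).2
      have hqW : (⇑α.symm)^[k - n] x₀ ∈ (⇑α.symm)^[k - n] '' W := Set.mem_image_of_mem _ hxW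
      have hstep : α ((⇑α.symm)^[k - n] x₀) = (⇑α.symm)^[k - (n+1)] x₀ := by
        rw [show k - n = (k - (n+1)) + 1 from by omega, Function.iterate_succ_apply',
          Homeomorph.apply_symm_apply]
      have hqY : α ((⇑α.symm)^[k - n] x₀) ∉ Y := by
        rw [hstep]
        exact hbY (k - (n+1)) (by omega)
      obtain ⟨ξ, hvan, c', hpos', hq', hconj'⟩ :=
        stepF hrep hYcl (himgBopen (k - n)) hs hnorm hqW hqY c
      refine ⟨t ξ * r,
        mul_mem (StarAlgebra.subset_adjoin ℂ gens (Or.inr ⟨ξ, hvan, rfl⟩)) hr,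
        c', hpos' hc0, ?_, ?_⟩
      · rw [← hstep, hq']
        exact hcpos
      · rw [star_mul]
        have h1 : t ξ * r * p (toC b) * (star r * star (t ξ))
            = t ξ * (r * p (toC b) * star r) * star (t ξ) := by
          simp only [mul_assoc]
        rw [h1, hconj, hconj']
  obtain ⟨ra, hra, A, hAnn, hApos, hAconj⟩ := chainB m le_rfl
  obtain ⟨rb, hrb, Bf, hBnn, hBpos, hBconj⟩ := chainF k le_rfl
  rw [Nat.sub_self, Function.iterate_zero, id_eq] at hApos hBpos
  set f : C(X, ℝ) := A * Bf with hf
  have hf0 : 0 ≤ f := by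
    rw [ContinuousMap.le_def]
    intro x
    simp only [ContinuousMap.zero_apply, hf, ContinuousMap.mul_apply]
    exact mul_nonneg (ContinuousMap.le_def.mp hAnn x) (ContinuousMap.le_def.mp hBnn x)
  have hfx : 0 < f x₀ := by
    simp only [hf, ContinuousMap.mul_apply]
    exact mul_pos hApos hBpos
  have hfne : f ≠ 0 := by
    intro h
    rw [h] at hfx
    simp at hfx
  set sA : C(X, ℝ) := ⟨fun x => Real.sqrt (A x), Real.continuous_sqrt.comp A.continuous⟩
    with hsA
  set sB : C(X, ℝ) := ⟨fun x => Real.sqrt (Bf x), Real.continuous_sqrt.comp Bf.continuous⟩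
    with hsB
  have hstarC : ∀ u : C(X, ℝ), star (toC u) = toC u := by
    intro u
    ext x
    show star ((u x : ℂ)) = (u x : ℂ)
    rw [Complex.star_def, Complex.conj_ofReal]
  have hkey_a : toC sB * toC A * toC sB = toC f := by
    ext x
    show ((Real.sqrt (Bf x) : ℂ)) * ((A x : ℂ)) * ((Real.sqrt (Bf x) : ℂ))
      = (((A * Bf) x : ℝ) : ℂ)
    have hr : Real.sqrt (Bf x) * A x * Real.sqrt (Bf x) = (A * Bf) x := by
      rw [ContinuousMap.mul_apply, mul_comm (Real.sqrt (Bf x)) (A x), mul_assoc,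
        Real.mul_self_sqrt (ContinuousMap.le_def.mp hBnn x)]
    exact_mod_cast congrArg (fun r : ℝ => (r : ℂ)) hr
  have hkey_b : toC sA * toC Bf * toC sA = toC f := by
    ext x
    show ((Real.sqrt (A x) : ℂ)) * ((Bf x : ℂ)) * ((Real.sqrt (A x) : ℂ))
      = (((A * Bf) x : ℝ) : ℂ)
    have hr : Real.sqrt (A x) * Bf x * Real.sqrt (A x) = (A * Bf) x := by
      rw [ContinuousMap.mul_apply, mul_comm (Real.sqrt (A x)) (Bf x), mul_assoc,
        Real.mul_self_sqrt (ContinuousMap.le_def.mp hAnn x), mul_comm]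
    exact_mod_cast congrArg (fun r : ℝ => (r : ℂ)) hr
  have hle : ∀ x ∈ StarAlgebra.adjoin ℂ gens, x ∈ OBalg α V B p t Y :=
    fun x hx => StarSubalgebra.le_topologicalClosure _ hx
  refine ⟨f, hf0, hfne, ?_, ?_⟩
  · intro ε hε
    refine ⟨p (toC sB) * ra, hle _ (mul_mem (hpmem _) hra), ?_⟩
    have h1 : p (toC sB) * ra * p (toC a) * star (p (toC sB) * ra)
        = p (toC sB) * (ra * p (toC a) * star ra) * star (p (toC sB)) := by
      rw [star_mul]
      simp only [mul_assoc]
    rw [h1, hAconj, ← map_star, hstarC sB, ← map_mul, ← map_mul, hkey_a,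
      sub_self, norm_zero]
    exact hε
  · intro ε hε
    refine ⟨p (toC sA) * rb, hle _ (mul_mem (hpmem _) hrb), ?_⟩
    have h1 : p (toC sA) * rb * p (toC b) * star (p (toC sA) * rb)
        = p (toC sA) * (rb * p (toC b) * star rb) * star (p (toC sA)) := by
      rw [star_mul]
      simp only [mul_assoc]
    rw [h1, hBconj, ← map_star, hstarC sA, ← map_mul, ← map_mul, hkey_b,
      sub_self, norm_zero]
    exact hε
end
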